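/- Let (X,d) be a metric space of cardinality 2n and let Π = {{x_1^+,…,x_n^+},{x_1^-,…,x_n^-}} be a partition of X into two n-tuples of points. Define M(Π,d') := min over permutations σ of {1,…,n} of ∑_{i=1}^n d'(x_i^+, x_{σ(i)}^-) for any pseudometric d' on X. Then M(Π,d) = max over all 1-Lipschitz functions f : X → ℝ of M(Π, f*d_ℝ), where f*d_ℝ(x,y) := |f(x) − f(y)|, and the maximum is attained. -/

import Mathlib

open Finset

section pot
variable {n : ℕ} (w : Fin n → Fin n → ℝ)

/-- weight of a walk of length `m` -/
noncomputable def Wk (s : ℕ → Fin n) (m : ℕ) : ℝ :=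
  ∑ j ∈ Finset.range m, w (s j) (s (j + 1))

lemma Wk_split (s : ℕ → Fin n) {a b m : ℕ} (hab : a < b) (hbm : b < m)
    (hs : s a = s b) :
    Wk w s m = Wk w (fun j => s (a + j)) (b - a)
      + Wk w (fun j => if j ≤ a then s j else s (j + (b - a))) (m - (b - a)) := by
  set c := b - a with hc
  have hcb : a + c = b := by omega
  have hacm : a ≤ m - c := by omega
  have hsa : s (a + c) = s a := by rw [hcb, hs]
  -- middle part
  have ht : Wk w (fun j => s (a + j)) c = ∑ j ∈ Finset.Ico a b, w (s j) (s (j + 1)) := by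
    rw [Finset.sum_Ico_eq_sum_range]
    have : b - a = c := rfl
    rw [this]
    unfold Wk
    apply Finset.sum_congr rfl
    intro j hj
    congr 2 <;> omega
  -- outer part
  have hu : Wk w (fun j => if j ≤ a then s j else s (j + c)) (m - c)
      = (∑ j ∈ Finset.range a, w (s j) (s (j + 1)))
        + ∑ j ∈ Finset.Ico b m, w (s j) (s (j + 1)) := by
    unfold Wk
    rw [Finset.range_eq_Ico, ← Finset.sum_Ico_consecutive _ (Nat.zero_le a) hacm,
      ← Finset.range_eq_Ico]
    congr 1
    · apply Finset.sum_congr rfl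
      intro j hj
      simp only [Finset.mem_range] at hj
      beta_reduce
      rw [if_pos (by omega), if_pos (by omega)]
    · rw [Finset.sum_Ico_eq_sum_range, Finset.sum_Ico_eq_sum_range]
      have : m - c - a = m - b := by omega
      rw [this]
      apply Finset.sum_congr rfl
      have hval : ∀ j, a ≤ j → (if j ≤ a then s j else s (j + c)) = s (j + c) := by
        intro j hj
        rcases eq_or_lt_of_le hj with h | h
        · rw [if_pos (le_of_eq h.symm), ← h, hsa]
        · rw [if_neg (by omega)]
      intro j hj
      simp only [Finset.mem_range] at hj
      beta_reduce
      rw [hval _ (by omega), hval _ (by omega)]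
      congr 2 <;> omega
  rw [ht, hu]
  unfold Wk
  rw [Finset.range_eq_Ico, ← Finset.sum_Ico_consecutive _ (Nat.zero_le a) (le_of_lt (lt_trans hab hbm)),
    ← Finset.sum_Ico_consecutive _ (le_of_lt hab) (le_of_lt hbm), ← Finset.range_eq_Ico]
  ring


/-- nonnegativity of closed walks -/
lemma Wk_closed_nonneg (hw0 : ∀ i, w i i = 0)
    (hcyc : ∀ τ : Equiv.Perm (Fin n), 0 ≤ ∑ i, w i (τ i))
    (m : ℕ) : ∀ s : ℕ → Fin n, s m = s 0 → 0 ≤ Wk w s m := by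
  induction m using Nat.strong_induction_on with
  | _ m IH =>
    intro s hcl
    rcases Nat.eq_zero_or_pos m with hm0 | hm0
    · subst hm0; simp [Wk]
    by_cases hinj : ∀ a < m, ∀ b < m, s a = s b → a = b
    · -- simple cycle: use formPerm
      set l : List (Fin n) := List.ofFn (fun j : Fin m => s j) with hl
      have hlen : l.length = m := by simp [hl]
      have hnd : l.Nodup := by
        rw [hl, List.nodup_ofFn]
        intro a b hab
        exact Fin.ext (hinj a a.isLt b b.isLt hab)
      set π := l.formPerm with hπ
      have hgl : ∀ j : Fin m, l[(j : ℕ)]'(by omega) = s j := by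
        intro j; simp [hl]
      have key : ∑ i, w i (π i) = Wk w s m := by
        have h1 : ∑ i, w i (π i) = ∑ x ∈ l.toFinset, w x (π x) := by
          refine (Finset.sum_subset (Finset.subset_univ _) ?_).symm
          intro x _ hx
          rw [hπ, List.formPerm_apply_of_notMem (by simpa using hx), hw0]
        have h2 : ∑ x ∈ l.toFinset, w x (π x) = ∑ j : Fin m, w (s j) (π (s j)) := by
          rw [List.sum_toFinset _ hnd, hl, List.map_ofFn, List.sum_ofFn]
          rfl
        have h3 : ∀ j : Fin m, π (s j) = s ((j + 1) % m) := by
          intro j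
          rw [← hgl j, hπ, List.formPerm_apply_getElem _ hnd _ (by omega)]
          simp only [hl, List.getElem_ofFn]
          congr 1
          simp only [hl] at hlen ⊢
          rw [hlen]
        rw [h1, h2]
        unfold Wk
        rw [← Fin.sum_univ_eq_sum_range (fun j => w (s j) (s (j+1))) m]
        apply Finset.sum_congr rfl
        intro j _
        rw [h3 j]
        congr 1
        rcases Nat.lt_or_ge ((j : ℕ) + 1) m with h | h
        · rw [Nat.mod_eq_of_lt h]
        · have : (j : ℕ) + 1 = m := by omega
          rw [this, Nat.mod_self, ← hcl]
      rw [← key]; exact hcyc π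
    · push_neg at hinj
      obtain ⟨a, ha, b, hb, hsab, hne⟩ := hinj
      -- wlog a < b
      rcases Nat.lt_or_ge a b with hab | hab
      case _ =>
        rw [Wk_split w s hab hb hsab]
        have h1 := IH (b - a) (by omega) (fun j => s (a + j)) (by
          beta_reduce
          rw [show a + (b - a) = b from by omega, show a + 0 = a from by omega, hsab])
        have h2 := IH (m - (b - a)) (by omega)
          (fun j => if j ≤ a then s j else s (j + (b - a))) (by
          beta_reduce
          rw [if_neg (by omega), if_pos (Nat.zero_le a),
            show m - (b - a) + (b - a) = m from by omega, hcl])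
        linarith
      case _ =>
        have hba : b < a := by omega
        rw [Wk_split w s hba ha hsab.symm]
        have h1 := IH (a - b) (by omega) (fun j => s (b + j)) (by
          beta_reduce
          rw [show b + (a - b) = a from by omega, show b + 0 = b from by omega, hsab])
        have h2 := IH (m - (a - b)) (by omega)
          (fun j => if j ≤ b then s j else s (j + (a - b))) (by
          beta_reduce
          rw [if_neg (by omega), if_pos (Nat.zero_le b),
            show m - (a - b) + (a - b) = m from by omega, hcl])
        linarith

variable (hn : 0 < n)

noncomputable def BF : ℕ → Fin n → ℝ
  | 0 => fun _ => 0
  | (m+1) => fun k =>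
      min (BF m k)
        ((Finset.univ.inf' (by simp [Finset.univ_nonempty_iff]; exact Fin.pos_iff_nonempty.mp hn)
          (fun i => BF m i + w i k)))

lemma BF_mono (m : ℕ) (k : Fin n) : BF w hn (m+1) k ≤ BF w hn m k := min_le_left _ _

lemma BF_le_zero (m : ℕ) (k : Fin n) : BF w hn m k ≤ 0 := by
  induction m with
  | zero => simp [BF]
  | succ m ih => exact le_trans (BF_mono w hn m k) ih

lemma BF_le_step (m : ℕ) (i k : Fin n) : BF w hn (m+1) k ≤ BF w hn m i + w i k :=
  le_trans (min_le_right _ _) (Finset.inf'_le _ (Finset.mem_univ i))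

/-- (A): BF m bounds weights of walks of length ≤ m -/
lemma BF_le_walk (s : ℕ → Fin n) (m' : ℕ) :
    ∀ m, m' ≤ m → BF w hn m (s m') ≤ Wk w s m' := by
  induction m' with
  | zero => intro m _; simpa [Wk] using BF_le_zero w hn m (s 0)
  | succ m' ih =>
    intro m hm
    obtain ⟨m'', rfl⟩ : ∃ m'', m = m'' + 1 := ⟨m - 1, by omega⟩
    calc BF w hn (m''+1) (s (m'+1)) ≤ BF w hn m'' (s m') + w (s m') (s (m'+1)) :=
          BF_le_step w hn m'' _ _
      _ ≤ Wk w s m' + w (s m') (s (m'+1)) := by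
          have := ih m'' (by omega); linarith
      _ = Wk w s (m'+1) := by rw [Wk, Wk, Finset.sum_range_succ]

/-- (B): BF m k is attained by some walk of length ≤ m ending at k -/
lemma BF_attained (m : ℕ) (k : Fin n) :
    ∃ m' ≤ m, ∃ s : ℕ → Fin n, s m' = k ∧ BF w hn m k = Wk w s m' := by
  induction m generalizing k with
  | zero => exact ⟨0, le_refl _, fun _ => k, rfl, by simp [BF, Wk]⟩
  | succ m ih =>
    have hne : (Finset.univ : Finset (Fin n)).Nonempty := by
      simp [Finset.univ_nonempty_iff]; exact Fin.pos_iff_nonempty.mp hn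
    have hBF : BF w hn (m+1) k = min (BF w hn m k)
        (Finset.univ.inf' (by simp [Finset.univ_nonempty_iff]; exact Fin.pos_iff_nonempty.mp hn)
          (fun i => BF w hn m i + w i k)) := rfl
    rcases le_total (BF w hn m k)
      (Finset.univ.inf' (by simp [Finset.univ_nonempty_iff]; exact Fin.pos_iff_nonempty.mp hn)
          (fun i => BF w hn m i + w i k)) with hle | hle
    · obtain ⟨m', hm', s, hsk, hval⟩ := ih k
      exact ⟨m', by omega, s, hsk, by rw [hBF, min_eq_left hle, hval]⟩
    · obtain ⟨i, _, hi⟩ := Finset.exists_mem_eq_inf' (α := ℝ)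
        (by simp [Finset.univ_nonempty_iff]; exact Fin.pos_iff_nonempty.mp hn : (Finset.univ : Finset (Fin n)).Nonempty)
        (fun i => BF w hn m i + w i k)
      obtain ⟨m', hm', s, hsk, hval⟩ := ih i
      refine ⟨m' + 1, by omega, fun j => if j ≤ m' then s j else k, ?_, ?_⟩
      · beta_reduce
        rw [if_neg (by omega)]
      · rw [hBF, min_eq_right hle, hi, hval]
        rw [Wk, Wk, Finset.sum_range_succ]
        congr 1
        · apply Finset.sum_congr rfl
          intro j hj
          simp only [Finset.mem_range] at hj
          beta_reduce
          rw [if_pos (by omega), if_pos (by omega)]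
        · beta_reduce
          rw [if_pos (le_refl _), if_neg (by omega), hsk]

end pot

section potmain
variable {n : ℕ}
lemma exists_potential (hn : 0 < n) (w : Fin n → Fin n → ℝ)
    (hw0 : ∀ i, w i i = 0)
    (hcyc : ∀ τ : Equiv.Perm (Fin n), 0 ≤ ∑ i, w i (τ i)) :
    ∃ p : Fin n → ℝ, ∀ i k, p k ≤ p i + w i k := by
  refine ⟨BF w hn n, fun i k => ?_⟩
  have stab : BF w hn n k ≤ BF w hn (n+1) k := by
    obtain ⟨m', hm', s, hsk, hval⟩ := BF_attained w hn (n+1) k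
    rcases Nat.lt_or_ge m' (n+1) with hlt | hge
    · rw [hval, ← hsk]
      exact BF_le_walk w hn s m' n (by omega)
    · have hm'' : m' = n + 1 := by omega
      -- pigeonhole: a repeat among s 0, ..., s n
      obtain ⟨a, b, hab, hsab⟩ := Fintype.exists_ne_map_eq_of_card_lt
        (fun j : Fin (n+1) => s j) (by simp)
      -- wlog a < b
      have key : ∀ a b : Fin (n+1), (a : ℕ) < b → s a = s b → BF w hn n k ≤ BF w hn (n+1) k := by
        intro a b hab hsab
        have hbm : (b : ℕ) < m' := by omega
        have hsplit := Wk_split w s hab hbm hsab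
        have ht := Wk_closed_nonneg w hw0 hcyc (b - a) (fun j => s (a + j)) (by
          beta_reduce
          rw [show (a:ℕ) + ((b:ℕ) - a) = b from by omega, show (a:ℕ) + 0 = a from by omega, hsab])
        set c : ℕ := (b:ℕ) - a with hc
        have hc1 : 1 ≤ c := by omega
        have hub : (fun j => if j ≤ (a:ℕ) then s j else s (j + c)) (m' - c) = k := by
          beta_reduce
          rw [if_neg (by omega), show m' - c + c = m' from by omega, hsk]
        have := BF_le_walk w hn (fun j => if j ≤ (a:ℕ) then s j else s (j + c)) (m' - c) n (by omega)
        rw [show (if m' - c ≤ (a:ℕ) then s (m' - c) else s (m' - c + c)) = k from hub] at this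
        rw [hval]
        linarith
      rcases Nat.lt_or_ge (a : ℕ) b with h | h
      · exact key a b h hsab
      · have : (b : ℕ) < a := by
          rcases Nat.lt_or_ge (b:ℕ) a with h' | h'
          · exact h'
          · exact absurd (Fin.ext (by omega)) hab
        exact key b a this hsab.symm
  exact le_trans stab (BF_le_step w hn n i k)
end potmain

/-- **Kantorovich duality, pullback formulation.** -/
theorem stmt2 {X : Type*} [MetricSpace X] (n : ℕ) (xp xm : Fin n → X)
    (hbij : Function.Bijective (Sum.elim xp xm)) :
    (∀ f : X → ℝ, LipschitzWith 1 f →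
      (⨅ σ : Equiv.Perm (Fin n), ∑ i, |f (xp i) - f (xm (σ i))|) ≤
        ⨅ σ : Equiv.Perm (Fin n), ∑ i, dist (xp i) (xm (σ i))) ∧
    ∃ f : X → ℝ, LipschitzWith 1 f ∧
      (⨅ σ : Equiv.Perm (Fin n), ∑ i, |f (xp i) - f (xm (σ i))|) =
        ⨅ σ : Equiv.Perm (Fin n), ∑ i, dist (xp i) (xm (σ i)) := by
  have easy : ∀ f : X → ℝ, LipschitzWith 1 f →
      (⨅ σ : Equiv.Perm (Fin n), ∑ i, |f (xp i) - f (xm (σ i))|) ≤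
        ⨅ σ : Equiv.Perm (Fin n), ∑ i, dist (xp i) (xm (σ i)) := by
    intro f hf
    apply le_ciInf
    intro σ
    refine le_trans (ciInf_le (Set.Finite.bddBelow (Set.finite_range _)) σ) ?_
    apply Finset.sum_le_sum
    intro i _
    rw [← Real.dist_eq]
    simpa using hf.dist_le_mul (xp i) (xm (σ i))
  refine ⟨easy, ?_⟩
  rcases Nat.eq_zero_or_pos n with hn0 | hn
  · subst hn0
    refine ⟨fun _ => 0, LipschitzWith.const' 0, ?_⟩
    simp
  -- hard direction
  set c : Fin n → Fin n → ℝ := fun i j => dist (xp i) (xm j) with hc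
  obtain ⟨σs, hσs⟩ := Finite.exists_min (fun σ : Equiv.Perm (Fin n) => ∑ i, c i (σ i))
  set w : Fin n → Fin n → ℝ := fun i k => c i (σs k) - c k (σs k) with hw
  have hw0 : ∀ i, w i i = 0 := fun i => sub_self _
  have hcyc : ∀ τ : Equiv.Perm (Fin n), 0 ≤ ∑ i, w i (τ i) := by
    intro τ
    have h1 : ∑ i, c (τ i) (σs (τ i)) = ∑ k, c k (σs k) :=
      Equiv.sum_comp τ (fun k => c k (σs k))
    have h2 : ∑ i, c i (σs (τ i)) = ∑ i, c i ((τ.trans σs) i) := rfl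
    have h3 := hσs (τ.trans σs)
    simp only [hw, Finset.sum_sub_distrib]
    rw [h1, h2]
    linarith [h3]
  obtain ⟨p, hp⟩ := exists_potential hn w hw0 hcyc
  set v : Fin n → ℝ := fun j => p (σs.symm j) + c (σs.symm j) j with hv
  have : Nonempty (Fin n) := Fin.pos_iff_nonempty.mp hn
  have hne : (Finset.univ : Finset (Fin n)).Nonempty := Finset.univ_nonempty
  set f : X → ℝ := fun x => Finset.univ.inf' hne (fun j => dist x (xm j) - v j) with hfdef
  -- key pointwise inequality
  have hkey : ∀ i j, -p i + v j ≤ c i j := by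
    intro i j
    have := hp i (σs.symm j)
    simp only [hw, Equiv.apply_symm_apply] at this
    simp only [hv]
    linarith
  have hLip : LipschitzWith 1 f := by
    apply LipschitzWith.of_dist_le_mul
    intro x y
    simp only [NNReal.coe_one, one_mul]
    rw [Real.dist_eq, abs_le]
    constructor
    · obtain ⟨j, _, hj⟩ := Finset.exists_mem_eq_inf' hne (fun j => dist x (xm j) - v j)
      rw [hfdef]
      have h1 : Finset.univ.inf' hne (fun j' => dist y (xm j') - v j') ≤ dist y (xm j) - v j :=
        Finset.inf'_le _ (Finset.mem_univ j)
      have h2 := dist_triangle y x (xm j)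
      simp only [hj]
      have h3 : dist y x = dist x y := dist_comm y x
      linarith
    · obtain ⟨j, _, hj⟩ := Finset.exists_mem_eq_inf' hne (fun j => dist y (xm j) - v j)
      rw [hfdef]
      have h1 : Finset.univ.inf' hne (fun j' => dist x (xm j') - v j') ≤ dist x (xm j) - v j :=
        Finset.inf'_le _ (Finset.mem_univ j)
      have h2 := dist_triangle x y (xm j)
      simp only [hj]
      linarith
  have hfm : ∀ j, f (xm j) ≤ -v j := by
    intro j
    refine le_trans (Finset.inf'_le _ (Finset.mem_univ j)) ?_
    simp
  have hfp : ∀ i, -p i ≤ f (xp i) := by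
    intro i
    apply Finset.le_inf'
    intro j _
    have := hkey i j
    simp only [hc] at this
    linarith
  refine ⟨f, hLip, le_antisymm (easy f hLip) ?_⟩
  -- lower bound
  have hMle : ∀ σ : Equiv.Perm (Fin n),
      ∑ k, c k (σs k) ≤ ∑ i, |f (xp i) - f (xm (σ i))| := by
    intro σ
    have h1 : ∑ i, (f (xp i) - f (xm (σ i))) ≤ ∑ i, |f (xp i) - f (xm (σ i))| :=
      Finset.sum_le_sum (fun i _ => le_abs_self _)
    have h2 : ∑ i, f (xm (σ i)) = ∑ j, f (xm j) := Equiv.sum_comp σ (fun j => f (xm j))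
    have h3 : ∑ j, v j = ∑ k, v (σs k) := (Equiv.sum_comp σs (fun j => v j)).symm
    have h4 : ∑ k, v (σs k) = ∑ k, p k + ∑ k, c k (σs k) := by
      rw [← Finset.sum_add_distrib]
      apply Finset.sum_congr rfl
      intro k _
      simp only [hv, σs.symm_apply_apply]
    have h5 : ∑ i, f (xm i) ≤ ∑ j, -v j := Finset.sum_le_sum (fun j _ => hfm j)
    have h6 : ∑ i, -p i ≤ ∑ i, f (xp i) := Finset.sum_le_sum (fun i _ => hfp i)
    have h7 : ∑ i, (f (xp i) - f (xm (σ i))) = ∑ i, f (xp i) - ∑ j, f (xm j) := by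
      rw [Finset.sum_sub_distrib, h2]
    simp only [Finset.sum_neg_distrib] at h5 h6
    linarith
  have hlb : ∑ k, c k (σs k) ≤ ⨅ σ : Equiv.Perm (Fin n), ∑ i, |f (xp i) - f (xm (σ i))| :=
    le_ciInf hMle
  have hub : (⨅ σ : Equiv.Perm (Fin n), ∑ i, dist (xp i) (xm (σ i))) ≤ ∑ k, c k (σs k) :=
    ciInf_le (Set.Finite.bddBelow (Set.finite_range _)) σs
  exact le_trans hub hlb
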